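/- Let d ≥ 2 and n ≥ 2d, and for each j ∈ {1,…,d} let k^j : X^j × X^j → ℝ satisfy 0 ≤ k^j(x,y) ≤ K^j for all x,y ∈ X^j. Then for every d-tuple π of permutations of {1,…,n} and all datasets X, X̃ of size n with d_ham(X, X̃) ≤ 1, one has |U(X^π) − U(X̃^π)| ≤ (4d^2 + 4d)·(Π_{j=1}^d K^j)/n. -/

import Mathlib

open Finset Function

noncomputable section

/-- The dHSIC U-statistic of a dataset of size `n`. All sums range over tuples of
pairwise distinct indices. -/
def Ustat {d n : ℕ} {X : Fin d → Type*} (k : ∀ j, X j → X j → ℝ)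
    (D : Fin n → ∀ j, X j) : ℝ :=
  ((n - 2).factorial : ℝ) / (n.factorial : ℝ) *
      ∑ i ∈ Finset.univ.filter (fun i : Fin 2 → Fin n => Function.Injective i),
        ∏ j, k j (D (i 0) j) (D (i 1) j)
    + ((n - 2 * d).factorial : ℝ) / (n.factorial : ℝ) *
        ∑ i ∈ Finset.univ.filter (fun i : Fin (2 * d) → Fin n => Function.Injective i),
          ∏ j, k j (D (i ⟨2 * (j : ℕ), by have := j.isLt; omega⟩) j)
                   (D (i ⟨2 * (j : ℕ) + 1, by have := j.isLt; omega⟩) j)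
    - 2 * ((n - (d + 1)).factorial : ℝ) / (n.factorial : ℝ) *
        ∑ i ∈ Finset.univ.filter (fun i : Fin (d + 1) → Fin n => Function.Injective i),
          ∏ j, k j (D (i ⟨0, by omega⟩) j) (D (i ⟨(j : ℕ) + 1, by have := j.isLt; omega⟩) j)

/-- Dataset permuted by a `d`-tuple of permutations. -/
def permuteD {d n : ℕ} {X : Fin d → Type*} (π : Fin d → Equiv.Perm (Fin n))
    (D : Fin n → ∀ j, X j) : Fin n → ∀ j, X j :=
  fun i j => D (π j i) j

/-- Hamming distance between two datasets. -/
def hamD {d n : ℕ} {X : Fin d → Type*} (D D' : Fin n → ∀ j, X j) : ℕ :=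
  Set.ncard {i | D i ≠ D' i}



lemma card_inj_funs (m n : ℕ) :
    (univ.filter fun i : Fin m → Fin n => Injective i).card = n.descFactorial m := by
  rw [← Fintype.card_subtype]
  rw [Fintype.card_congr (Equiv.subtypeInjectiveEquivEmbedding (Fin m) (Fin n))]
  simp [Fintype.card_embedding_eq]

lemma card_fiber_eq {m n : ℕ} (a : Fin m) (c c' : Fin n) :
    (univ.filter fun i : Fin m → Fin n => Injective i ∧ i a = c).card =
    (univ.filter fun i : Fin m → Fin n => Injective i ∧ i a = c').card := by
  apply Finset.card_nbij' (fun i => (Equiv.swap c c') ∘ i) (fun i => (Equiv.swap c c') ∘ i)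
  · intro i hi
    simp only [mem_coe, mem_filter, mem_univ, true_and] at hi ⊢
    refine ⟨(Equiv.swap c c').injective.comp hi.1, ?_⟩
    simp [hi.2]
  · intro i hi
    simp only [mem_coe, mem_filter, mem_univ, true_and] at hi ⊢
    refine ⟨(Equiv.swap c c').injective.comp hi.1, ?_⟩
    simp [hi.2, Equiv.swap_apply_right]
  · intro i _; funext x; simp
  · intro i _; funext x; simp

lemma n_mul_card_fiber {m n : ℕ} (a : Fin m) (c : Fin n) :
    n * (univ.filter fun i : Fin m → Fin n => Injective i ∧ i a = c).card
      = n.descFactorial m := by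
  have h1 : (univ.filter fun i : Fin m → Fin n => Injective i).card
      = ∑ c' : Fin n, (univ.filter fun i : Fin m → Fin n => Injective i ∧ i a = c').card := by
    rw [Finset.card_eq_sum_card_fiberwise (f := fun i => i a) (t := univ)
      (fun _ _ => mem_univ _)]
    exact Finset.sum_congr rfl fun c' _ => by rw [filter_filter]
  have h2 : ∑ c' : Fin n, (univ.filter fun i : Fin m → Fin n => Injective i ∧ i a = c').card
      = n * (univ.filter fun i : Fin m → Fin n => Injective i ∧ i a = c).card := by
    rw [Finset.sum_congr rfl fun c' _ => card_fiber_eq a c' c, Finset.sum_const]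
    simp [mul_comm]
  rw [← h2, ← h1, card_inj_funs]

lemma card_affected_le {m n : ℕ} (S : Finset (Fin n)) :
    n * (univ.filter fun i : Fin m → Fin n => Injective i ∧ ∃ a, i a ∈ S).card
      ≤ m * S.card * n.descFactorial m := by
  have hsub : (univ.filter fun i : Fin m → Fin n => Injective i ∧ ∃ a, i a ∈ S)
      ⊆ univ.biUnion (fun a : Fin m => univ.filter fun i => Injective i ∧ i a ∈ S) := by
    intro i hi
    simp only [mem_filter, mem_univ, true_and, mem_biUnion] at hi ⊢
    obtain ⟨h, a, ha⟩ := hi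
    exact ⟨a, h, ha⟩
  have hfib : ∀ a : Fin m,
      (univ.filter fun i : Fin m → Fin n => Injective i ∧ i a ∈ S).card
        = ∑ c ∈ S, (univ.filter fun i : Fin m → Fin n => Injective i ∧ i a = c).card := by
    intro a
    rw [Finset.card_eq_sum_card_fiberwise (f := fun i => i a) (t := S)
      (fun i hi => (mem_filter.mp hi).2.2)]
    refine Finset.sum_congr rfl fun c hc => ?_
    rw [filter_filter]
    congr 1
    ext i
    simp only [mem_filter, mem_univ, true_and]
    constructor
    · rintro ⟨⟨h1, _⟩, h3⟩; exact ⟨h1, h3⟩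
    · rintro ⟨h1, h3⟩; exact ⟨⟨h1, h3 ▸ hc⟩, h3⟩
  calc n * (univ.filter fun i : Fin m → Fin n => Injective i ∧ ∃ a, i a ∈ S).card
      ≤ n * ∑ a : Fin m,
          (univ.filter fun i : Fin m → Fin n => Injective i ∧ i a ∈ S).card :=
        Nat.mul_le_mul_left n ((Finset.card_le_card hsub).trans Finset.card_biUnion_le)
    _ = ∑ a : Fin m, ∑ c ∈ S,
          n * (univ.filter fun i : Fin m → Fin n => Injective i ∧ i a = c).card := by
        rw [Finset.mul_sum]
        exact Finset.sum_congr rfl fun a _ => by rw [hfib a, Finset.mul_sum]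
    _ = ∑ a : Fin m, ∑ c ∈ S, n.descFactorial m := by
        exact Finset.sum_congr rfl fun a _ =>
          Finset.sum_congr rfl fun c _ => n_mul_card_fiber a c
    _ = m * S.card * n.descFactorial m := by simp [mul_assoc]

lemma sum_diff_bound {m n : ℕ} (hm : 1 ≤ m) (hmn : m ≤ n) {S : Finset (Fin n)} {s : ℕ}
    (hS : S.card ≤ s)
    (F G : (Fin m → Fin n) → ℝ) {C : ℝ} (hC : 0 ≤ C)
    (hF : ∀ i, 0 ≤ F i ∧ F i ≤ C) (hG : ∀ i, 0 ≤ G i ∧ G i ≤ C)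
    (heq : ∀ i : Fin m → Fin n, (∀ a, i a ∉ S) → F i = G i) :
    ((n - m).factorial : ℝ) / n.factorial *
      |(∑ i ∈ univ.filter (fun i : Fin m → Fin n => Injective i), F i)
       - ∑ i ∈ univ.filter (fun i : Fin m → Fin n => Injective i), G i|
      ≤ (m : ℝ) * s * C / n := by
  have hn : 0 < n := lt_of_lt_of_le hm hmn
  set T := univ.filter fun i : Fin m → Fin n => Injective i ∧ ∃ a, i a ∈ S with hT
  have hTsub : T ⊆ univ.filter (fun i : Fin m → Fin n => Injective i) := by
    intro i hi
    simp only [hT, mem_filter, mem_univ, true_and] at hi ⊢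
    exact hi.1
  have habs : |(∑ i ∈ univ.filter (fun i : Fin m → Fin n => Injective i), F i)
       - ∑ i ∈ univ.filter (fun i : Fin m → Fin n => Injective i), G i| ≤ T.card * C := by
    rw [← Finset.sum_sub_distrib]
    calc |∑ i ∈ univ.filter (fun i : Fin m → Fin n => Injective i), (F i - G i)|
        ≤ ∑ i ∈ univ.filter (fun i : Fin m → Fin n => Injective i), |F i - G i| :=
          Finset.abs_sum_le_sum_abs _ _
      _ = ∑ i ∈ T, |F i - G i| := by
          refine (Finset.sum_subset hTsub fun i hi hni => ?_).symm
          simp only [hT, mem_filter, mem_univ, true_and, not_and, not_exists] at hi hni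
          rw [heq i (hni hi), sub_self, abs_zero]
      _ ≤ ∑ i ∈ T, C := by
          refine Finset.sum_le_sum fun i _ => ?_
          rw [abs_sub_le_iff]
          constructor <;> linarith [(hF i).1, (hF i).2, (hG i).1, (hG i).2]
      _ = T.card * C := by rw [Finset.sum_const, nsmul_eq_mul]
  have hcount : (T.card : ℝ) * n * ((n - m).factorial : ℝ) ≤ (m : ℝ) * s * n.factorial := by
    have h1 : n * T.card ≤ m * S.card * n.descFactorial m := card_affected_le S
    have h2 : n * T.card * (n - m).factorial ≤ m * s * (n.descFactorial m * (n - m).factorial) := by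
      calc n * T.card * (n - m).factorial
          ≤ m * S.card * n.descFactorial m * (n - m).factorial :=
            Nat.mul_le_mul_right _ h1
        _ = m * S.card * (n.descFactorial m * (n - m).factorial) := by ring
        _ ≤ m * s * (n.descFactorial m * (n - m).factorial) :=
            Nat.mul_le_mul_right _ (Nat.mul_le_mul_left _ hS)
    have h3 : n.descFactorial m * (n - m).factorial = n.factorial := by
      rw [mul_comm]; exact Nat.factorial_mul_descFactorial hmn
    rw [h3] at h2
    calc (T.card : ℝ) * n * ((n - m).factorial : ℝ)
        = ((n * T.card * (n - m).factorial : ℕ) : ℝ) := by push_cast; ring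
      _ ≤ ((m * s * n.factorial : ℕ) : ℝ) := by exact_mod_cast h2
      _ = (m : ℝ) * s * n.factorial := by push_cast; ring
  have hfac : (0 : ℝ) < n.factorial := by exact_mod_cast n.factorial_pos
  calc ((n - m).factorial : ℝ) / n.factorial *
      |(∑ i ∈ univ.filter (fun i : Fin m → Fin n => Injective i), F i)
       - ∑ i ∈ univ.filter (fun i : Fin m → Fin n => Injective i), G i|
      ≤ ((n - m).factorial : ℝ) / n.factorial * (T.card * C) := by
        apply mul_le_mul_of_nonneg_left habs
        positivity
    _ ≤ (m : ℝ) * s * C / n := by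
        rw [div_mul_eq_mul_div, div_le_div_iff₀ hfac (by exact_mod_cast hn)]
        calc ((n - m).factorial : ℝ) * (T.card * C) * n
            = C * ((T.card : ℝ) * n * ((n - m).factorial : ℝ)) := by ring
          _ ≤ C * ((m : ℝ) * s * n.factorial) :=
              mul_le_mul_of_nonneg_left hcount hC
          _ = (m : ℝ) * s * C * n.factorial := by ring


/-- sensitivity of the permuted dHSIC U-statistic. -/
theorem sensitivity_permuted_dHSIC_Ustatistic
    {d n : ℕ} (hd : 2 ≤ d) (hn : 2 * d ≤ n)
    (X : Fin d → Type*) (k : ∀ j, X j → X j → ℝ) (K : Fin d → ℝ)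
    (hbdd : ∀ j, ∀ x y : X j, 0 ≤ k j x y ∧ k j x y ≤ K j)
    (π : Fin d → Equiv.Perm (Fin n))
    (D D' : Fin n → ∀ j, X j) (hham : hamD D D' ≤ 1) :
    |Ustat k (permuteD π D) - Ustat k (permuteD π D')|
      ≤ (4 * (d : ℝ) ^ 2 + 4 * (d : ℝ)) * (∏ j, K j) / (n : ℝ) := by
  have hn0 : 0 < n := by omega
  have hK : ∀ j, 0 ≤ K j := fun j => by
    have x : X j := D ⟨0, hn0⟩ j
    exact le_trans (hbdd j x x).1 (hbdd j x x).2
  have hC : 0 ≤ ∏ j, K j := Finset.prod_nonneg fun j _ => hK j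
  by_cases hDD : D = D'
  · subst hDD
    simp only [sub_self, abs_zero]
    apply div_nonneg (mul_nonneg (by positivity) hC) (by positivity)
  · obtain ⟨i₀, hi₀⟩ := Function.ne_iff.mp hDD
    have huniq : ∀ y, D y ≠ D' y → y = i₀ := fun y hy =>
      (Set.ncard_le_one_iff (Set.toFinite _)).mp hham hy hi₀
    set S : Finset (Fin n) := univ.image (fun j => (π j)⁻¹ i₀) with hSdef
    have hScard : S.card ≤ d := le_trans Finset.card_image_le (by simp)
    have hperm : ∀ (x : Fin n) (j : Fin d), x ∉ S →
        permuteD π D x j = permuteD π D' x j := by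
      intro x j hx
      have hne : π j x ≠ i₀ := by
        intro h
        apply hx
        simp only [hSdef, mem_image, mem_univ, true_and]
        exact ⟨j, by rw [← h]; simp⟩
      have hDeq : D (π j x) = D' (π j x) := by
        by_contra h
        exact hne (huniq _ h)
      simp only [permuteD, hDeq]
    have hprod : ∀ (P : Fin n → ∀ j, X j) (u v : Fin d → Fin n),
        0 ≤ ∏ j, k j (P (u j) j) (P (v j) j) ∧
          ∏ j, k j (P (u j) j) (P (v j) j) ≤ ∏ j, K j := by
      intro P u v
      exact ⟨Finset.prod_nonneg fun j _ => (hbdd j _ _).1,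
        Finset.prod_le_prod (fun j _ => (hbdd j _ _).1) (fun j _ => (hbdd j _ _).2)⟩
    have bound1 := sum_diff_bound (m := 2) (n := n) (by norm_num) (by omega) hScard
      (fun i => ∏ j, k j (permuteD π D (i 0) j) (permuteD π D (i 1) j))
      (fun i => ∏ j, k j (permuteD π D' (i 0) j) (permuteD π D' (i 1) j)) hC
      (fun i => hprod _ _ _) (fun i => hprod _ _ _)
      (fun i hi => Finset.prod_congr rfl fun j _ => by
        rw [hperm (i 0) j (hi 0), hperm (i 1) j (hi 1)])
    have bound2 := sum_diff_bound (m := 2 * d) (n := n) (by omega) hn hScard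
      (fun i => ∏ j, k j (permuteD π D (i ⟨2 * (j : ℕ), by have := j.isLt; omega⟩) j)
                         (permuteD π D (i ⟨2 * (j : ℕ) + 1, by have := j.isLt; omega⟩) j))
      (fun i => ∏ j, k j (permuteD π D' (i ⟨2 * (j : ℕ), by have := j.isLt; omega⟩) j)
                         (permuteD π D' (i ⟨2 * (j : ℕ) + 1, by have := j.isLt; omega⟩) j)) hC
      (fun i => hprod _ _ _) (fun i => hprod _ _ _)
      (fun i hi => Finset.prod_congr rfl fun j _ => by
        rw [hperm _ j (hi _), hperm _ j (hi _)])
    have bound3 := sum_diff_bound (m := d + 1) (n := n) (by omega) (by omega) hScard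
      (fun i => ∏ j, k j (permuteD π D (i ⟨0, by omega⟩) j)
                         (permuteD π D (i ⟨(j : ℕ) + 1, by have := j.isLt; omega⟩) j))
      (fun i => ∏ j, k j (permuteD π D' (i ⟨0, by omega⟩) j)
                         (permuteD π D' (i ⟨(j : ℕ) + 1, by have := j.isLt; omega⟩) j)) hC
      (fun i => hprod _ _ _) (fun i => hprod _ _ _)
      (fun i hi => Finset.prod_congr rfl fun j _ => by
        rw [hperm _ j (hi _), hperm _ j (hi _)])
    have tri : ∀ x y z : ℝ, |x + y - z| ≤ |x| + |y| + |z| := by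
      intro x y z
      calc |x + y - z| = |(x + y) + (-z)| := by ring_nf
        _ ≤ |x + y| + |-z| := abs_add_le _ _
        _ ≤ |x| + |y| + |z| := by rw [abs_neg]; linarith [abs_add_le x y]
    have w1 : (0:ℝ) ≤ ((n - 2).factorial : ℝ) / n.factorial := by positivity
    have w2 : (0:ℝ) ≤ ((n - 2 * d).factorial : ℝ) / n.factorial := by positivity
    have w3 : (0:ℝ) ≤ ((n - (d + 1)).factorial : ℝ) / n.factorial := by positivity
    have expand : Ustat k (permuteD π D) - Ustat k (permuteD π D')
        = ((n - 2).factorial : ℝ) / n.factorial *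
            ((∑ i ∈ Finset.univ.filter (fun i : Fin 2 → Fin n => Function.Injective i),
                ∏ j, k j (permuteD π D (i 0) j) (permuteD π D (i 1) j))
             - ∑ i ∈ Finset.univ.filter (fun i : Fin 2 → Fin n => Function.Injective i),
                ∏ j, k j (permuteD π D' (i 0) j) (permuteD π D' (i 1) j))
          + ((n - 2 * d).factorial : ℝ) / n.factorial *
            ((∑ i ∈ Finset.univ.filter (fun i : Fin (2 * d) → Fin n => Function.Injective i),
                ∏ j, k j (permuteD π D (i ⟨2 * (j : ℕ), by have := j.isLt; omega⟩) j)
                         (permuteD π D (i ⟨2 * (j : ℕ) + 1, by have := j.isLt; omega⟩) j))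
             - ∑ i ∈ Finset.univ.filter (fun i : Fin (2 * d) → Fin n => Function.Injective i),
                ∏ j, k j (permuteD π D' (i ⟨2 * (j : ℕ), by have := j.isLt; omega⟩) j)
                         (permuteD π D' (i ⟨2 * (j : ℕ) + 1, by have := j.isLt; omega⟩) j))
          - 2 * (((n - (d + 1)).factorial : ℝ) / n.factorial *
            ((∑ i ∈ Finset.univ.filter (fun i : Fin (d + 1) → Fin n => Function.Injective i),
                ∏ j, k j (permuteD π D (i ⟨0, by omega⟩) j)
                         (permuteD π D (i ⟨(j : ℕ) + 1, by have := j.isLt; omega⟩) j))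
             - ∑ i ∈ Finset.univ.filter (fun i : Fin (d + 1) → Fin n => Function.Injective i),
                ∏ j, k j (permuteD π D' (i ⟨0, by omega⟩) j)
                         (permuteD π D' (i ⟨(j : ℕ) + 1, by have := j.isLt; omega⟩) j))) := by
      simp only [Ustat]
      ring
    rw [expand]
    refine le_trans (tri _ _ _) ?_
    rw [abs_mul, abs_mul, abs_mul, abs_of_nonneg w1, abs_of_nonneg w2,
      abs_of_nonneg (by norm_num : (0:ℝ) ≤ 2), abs_mul, abs_of_nonneg w3]
    calc ((n - 2).factorial : ℝ) / n.factorial * _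
          + ((n - 2 * d).factorial : ℝ) / n.factorial * _
          + 2 * (((n - (d + 1)).factorial : ℝ) / n.factorial * _)
        ≤ ((2 : ℕ) : ℝ) * (d : ℕ) * (∏ j, K j) / n
          + ((2 * d : ℕ) : ℝ) * (d : ℕ) * (∏ j, K j) / n
          + 2 * (((d + 1 : ℕ) : ℝ) * (d : ℕ) * (∏ j, K j) / n) := by
          refine add_le_add (add_le_add bound1 bound2) ?_
          exact mul_le_mul_of_nonneg_left bound3 (by norm_num)
      _ = (4 * (d : ℝ) ^ 2 + 4 * (d : ℝ)) * (∏ j, K j) / (n : ℝ) := by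
          push_cast
          ring


end
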